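/- There exist constants c1, c2 > 0 such that for all n, k in [n], and epsilon > 0 with m <= k - 2*log2(1/epsilon) - c1 and k >= log2(log2(n)) + 2*log2(1/epsilon) + c1, a uniformly random function f : {0,1}^n -> {0,1}^m is an adaptive (k,epsilon)-ERF with probability at least 1 - 2^{-c2 * 2^n * epsilon^2}. -/

import Mathlib

/-- Binary decision trees over `n` input bits with outputs in `α` at the leaves. -/
inductive DTree (n : ℕ) (α : Type) : Type
  | leaf : α → DTree n α
  | node : Fin n → DTree n α → DTree n α → DTree n α

/-- The output of an adaptive adversary given by a decision tree on input `w`. -/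
def DTree.eval {n : ℕ} {α : Type} : DTree n α → (Fin n → Bool) → α
  | .leaf a, _ => a
  | .node i t0 t1, w => if w i then t1.eval w else t0.eval w

/-- The depth of a decision tree (the maximum number of bits read). -/
def DTree.depth {n : ℕ} {α : Type} : DTree n α → ℕ
  | .leaf _ => 0
  | .node _ t0 t1 => max t0.depth t1.depth + 1

deriving instance DecidableEq for DTree

namespace DTree
variable {n : ℕ} {α : Type}

/-- transcript of answers -/
def pathfn : DTree n α → (Fin n → Bool) → List Bool
  | .leaf _, _ => []
  | .node i t0 t1, w => w i :: (if w i then t1.pathfn w else t0.pathfn w)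

def strip : DTree n α → DTree n Unit
  | .leaf _ => .leaf ()
  | .node i t0 t1 => .node i t0.strip t1.strip

lemma depth_strip (T : DTree n α) : T.strip.depth = T.depth := by
  induction T with
  | leaf a => rfl
  | node i t0 t1 h0 h1 => simp [strip, depth, h0, h1]

lemma pathfn_strip (T : DTree n α) (w : Fin n → Bool) : T.strip.pathfn w = T.pathfn w := by
  induction T with
  | leaf a => rfl
  | node i t0 t1 h0 h1 =>
      by_cases h : w i <;> simp [strip, pathfn, h, h0, h1]

lemma length_pathfn (T : DTree n α) (w : Fin n → Bool) :
    (T.pathfn w).length ≤ T.depth := by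
  induction T with
  | leaf a => simp [pathfn, depth]
  | node i t0 t1 h0 h1 =>
      by_cases h : w i <;> simp [pathfn, depth, h] <;> omega

lemma eval_eq_of_pathfn (T : DTree n α) :
    ∃ r : List Bool → α, ∀ w, T.eval w = r (T.pathfn w) := by
  induction T with
  | leaf a => exact ⟨fun _ => a, fun w => rfl⟩
  | node i t0 t1 h0 h1 =>
      obtain ⟨r0, hr0⟩ := h0
      obtain ⟨r1, hr1⟩ := h1
      refine ⟨fun p => match p with
        | [] => r0 []
        | (b :: q) => if b then r1 q else r0 q, fun w => ?_⟩
      by_cases h : w i <;> simp [eval, pathfn, h, hr0, hr1]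

end DTree

open Finset

/-- all Bool-lists of length ≤ d -/
def listsLe : ℕ → Finset (List Bool)
  | 0 => {[]}
  | d + 1 => {[]} ∪ (listsLe d).image (true :: ·) ∪ (listsLe d).image (false :: ·)

lemma mem_listsLe {p : List Bool} : ∀ {d : ℕ}, p.length ≤ d → p ∈ listsLe d := by
  induction p with
  | nil => intro d _; cases d <;> simp [listsLe]
  | cons b q ih =>
      intro d hd
      match d with
      | dd + 1 =>
        have : q.length ≤ dd := by simpa using hd
        cases b <;> simp [listsLe] <;> exact ih this

lemma card_listsLe (d : ℕ) : (listsLe d).card < 2 ^ (d + 1) := by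
  induction d with
  | zero => simp [listsLe]
  | succ d ih =>
      have hu1 := card_union_le (({([] : List Bool)} : Finset (List Bool)) ∪ (listsLe d).image (true :: ·)) ((listsLe d).image (false :: ·))
      have hu2 := card_union_le ({([] : List Bool)} : Finset (List Bool)) ((listsLe d).image (true :: ·))
      have h1 := card_image_le (s := listsLe d) (f := (true :: ·))
      have h2 := card_image_le (s := listsLe d) (f := (false :: ·))
      have hp : (2:ℕ)^(d+1+1) = 2^(d+1) + 2^(d+1) := by ring
      simp only [listsLe, card_singleton] at *
      omega
def shapes (n : ℕ) : ℕ → Finset (DTree n Unit)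
  | 0 => {.leaf ()}
  | d+1 => {.leaf ()} ∪ ((univ : Finset (Fin n)) ×ˢ shapes n d ×ˢ shapes n d).image
      (fun p => .node p.1 p.2.1 p.2.2)

lemma mem_shapes {n : ℕ} {T : DTree n Unit} : ∀ {d}, T.depth ≤ d → T ∈ shapes n d := by
  induction T with
  | leaf a => intro d _; cases d <;> simp [shapes]
  | node i t0 t1 h0 h1 =>
      intro d hd
      match d with
      | dd + 1 =>
        have hd' : t0.depth ≤ dd ∧ t1.depth ≤ dd := by
          simp [DTree.depth] at hd; omega
        simp only [shapes, mem_union, mem_image]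
        exact Or.inr ⟨⟨i, t0, t1⟩, by simp [mem_product, h0 hd'.1, h1 hd'.2], rfl⟩

lemma card_shapes (n : ℕ) : ∀ d, (shapes n d).card ≤ (2*n+2) ^ (2^d - 1) := by
  intro d
  induction d with
  | zero => simp [shapes]
  | succ d ih =>
      have hc := card_union_le ({DTree.leaf () } : Finset (DTree n Unit))
        (((univ : Finset (Fin n)) ×ˢ shapes n d ×ˢ shapes n d).image
          (fun p => DTree.node p.1 p.2.1 p.2.2))
      have hi := card_image_le (s := (univ : Finset (Fin n)) ×ˢ shapes n d ×ˢ shapes n d)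
        (f := fun p => DTree.node p.1 p.2.1 p.2.2)
      rw [card_product, card_product, card_univ, Fintype.card_fin] at hi
      have he1 : 1 ≤ 2^d := Nat.one_le_two_pow
      have h2 : (2:ℕ)^(d+1) = 2^d + 2^d := by ring
      have hexp : 2^(d+1) - 1 = (2^d - 1) + (2^d - 1) + 1 := by omega
      set e := 2^d - 1 with he
      set c := (shapes n d).card with hcdef
      have hX : 1 ≤ (2*n+2)^e * (2*n+2)^e := Nat.one_le_iff_ne_zero.2 (by positivity)
      calc (shapes n (d+1)).card ≤ 1 + n * (c * c) := by
              simp only [shapes, card_singleton] at hc ⊢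
              omega
        _ ≤ 1 + n * ((2*n+2)^e * (2*n+2)^e) := by
              have := Nat.mul_le_mul ih ih
              have := Nat.mul_le_mul_left n this
              omega
        _ ≤ (2*n+2)^e * (2*n+2)^e * (2*n+2) := by nlinarith
        _ = (2*n+2) ^ (2^(d+1) - 1) := by rw [hexp]; ring

lemma key_ineq {t : ℝ} (ht : |t| ≤ 1) : Real.exp t - 1 - t ≤ t^2 := by
  have h := Real.exp_bound ht (n := 2) (by norm_num)
  have h2 : ∑ m ∈ range 2, t ^ m / m.factorial = 1 + t := by
    simp [Finset.sum_range_succ]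
  rw [h2] at h
  have := (abs_sub_le_iff.1 h).1
  have hsq : |t|^2 = t^2 := sq_abs t
  have : Real.exp t - (1+t) ≤ t^2 * (3 / (2*2)) := by
    calc Real.exp t - (1+t) ≤ |t|^2 * ((2:ℕ).succ / ((2:ℕ).factorial * 2)) := this
      _ = t^2 * (3 / (2*2)) := by rw [hsq]; norm_num [Nat.factorial]
  nlinarith [sq_nonneg t]

lemma mgf_bound {q t : ℝ} (hq0 : 0 ≤ q) (hq1 : q ≤ 1) (ht : |t| ≤ 1) :
    Real.exp (-(t*q)) * (1 + q * (Real.exp t - 1)) ≤ Real.exp (t^2) := by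
  have h1 : 1 + q*(Real.exp t - 1) ≤ Real.exp (q * (Real.exp t - 1)) := by
    have := Real.add_one_le_exp (q * (Real.exp t - 1)); linarith
  calc Real.exp (-(t*q)) * (1 + q * (Real.exp t - 1))
      ≤ Real.exp (-(t*q)) * Real.exp (q * (Real.exp t - 1)) := by
        exact mul_le_mul_of_nonneg_left h1 (Real.exp_pos _).le
    _ = Real.exp (q * (Real.exp t - 1 - t)) := by rw [← Real.exp_add]; ring_nf
    _ ≤ Real.exp (t^2) := by
        apply Real.exp_le_exp.2
        have hnn : 0 ≤ Real.exp t - 1 - t := by have := Real.add_one_le_exp t; linarith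
        have key := key_ineq ht
        nlinarith

section chernoff
variable {W Y : Type} [Fintype W] [Fintype Y] [DecidableEq W] [Nonempty Y]
variable (A : W → Y → Prop) [∀ w y, Decidable (A w y)]

/-- the centered indicator sum -/
noncomputable def Dev (f : W → Y) : ℝ :=
  ∑ w : W, ((if A w (f w) then (1:ℝ) else 0)
    - (Finset.univ.filter (fun y => A w y)).card / Fintype.card Y)

lemma chernoff_one_sided (t a : ℝ) (ht0 : 0 ≤ t) (ht1 : t ≤ 1) :
    ((Finset.univ.filter (fun f : W → Y => a ≤ Dev A f)).card : ℝ) ≤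
      Real.exp ((Fintype.card W) * t^2 - t * a) * Fintype.card (W → Y) := by
  classical
  set q : W → ℝ := fun w => (Finset.univ.filter (fun y => A w y)).card / Fintype.card Y with hq
  have hY : (0:ℝ) < Fintype.card Y := by positivity
  have hq0 : ∀ w, 0 ≤ q w := fun w => by positivity
  have hq1 : ∀ w, q w ≤ 1 := fun w => by
    rw [hq, div_le_one hY]
    exact_mod_cast Finset.card_filter_le _ _
  -- step 1: card ≤ ∑_f exp (t (Dev f - a))
  have step1 : ((Finset.univ.filter (fun f : W → Y => a ≤ Dev A f)).card : ℝ) ≤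
      ∑ f : W → Y, Real.exp (t * (Dev A f - a)) := by
    have hle : ∀ f ∈ Finset.univ.filter (fun f : W → Y => a ≤ Dev A f),
        (1:ℝ) ≤ Real.exp (t * (Dev A f - a)) := by
      intro f hf
      simp only [Finset.mem_filter] at hf
      rw [show (1:ℝ) = Real.exp 0 by simp]
      exact Real.exp_le_exp.2 (by nlinarith [hf.2])
    have hcard : ((Finset.univ.filter (fun f : W → Y => a ≤ Dev A f)).card : ℝ) =
        ∑ _f ∈ Finset.univ.filter (fun f : W → Y => a ≤ Dev A f), (1:ℝ) := by simp
    rw [hcard]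
    exact le_trans (Finset.sum_le_sum hle)
      (Finset.sum_le_sum_of_subset_of_nonneg (Finset.filter_subset _ _)
        (fun _ _ _ => (Real.exp_pos _).le))
  -- step 2: factorize
  have step2 : ∑ f : W → Y, Real.exp (t * (Dev A f - a)) =
      Real.exp (-(t*a)) * ∏ w : W, ∑ y : Y, Real.exp (t * ((if A w y then (1:ℝ) else 0) - q w)) := by
    have : ∀ f : W → Y, Real.exp (t * (Dev A f - a)) =
        Real.exp (-(t*a)) * ∏ w : W, Real.exp (t * ((if A w (f w) then (1:ℝ) else 0) - q w)) := by
      intro f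
      rw [← Real.exp_sum, ← Real.exp_add]
      congr 1
      simp only [Dev, hq]
      rw [mul_sub, Finset.mul_sum]
      ring
    simp only [this]
    rw [← Finset.mul_sum]
    congr 1
    exact (Fintype.prod_sum (fun w (y : Y) => Real.exp (t * ((if A w y then (1:ℝ) else 0) - q w)))).symm
  -- step 3: bound each factor
  have step3 : ∀ w : W, ∑ y : Y, Real.exp (t * ((if A w y then (1:ℝ) else 0) - q w)) ≤
      (Fintype.card Y) * Real.exp (t^2) := by
    intro w
    have hsplit : ∑ y : Y, Real.exp (t * ((if A w y then (1:ℝ) else 0) - q w)) =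
        ((Finset.univ.filter (fun y => A w y)).card : ℝ) * Real.exp (t * (1 - q w))
        + ((Finset.univ.filter (fun y => ¬ A w y)).card : ℝ) * Real.exp (t * (0 - q w)) := by
      rw [← Finset.sum_filter_add_sum_filter_not Finset.univ (fun y => A w y)]
      congr 1
      · rw [Finset.sum_congr rfl (fun y hy => by
          simp only [Finset.mem_filter] at hy
          rw [if_pos hy.2]), Finset.sum_const, nsmul_eq_mul]
      · rw [Finset.sum_congr rfl (fun y hy => by
          simp only [Finset.mem_filter] at hy
          rw [if_neg hy.2]), Finset.sum_const, nsmul_eq_mul]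
    rw [hsplit]
    have hcompl : ((Finset.univ.filter (fun y => ¬ A w y)).card : ℝ) =
        Fintype.card Y - (Finset.univ.filter (fun y => A w y)).card := by
      rw [Finset.filter_not, Finset.card_sdiff_of_subset (Finset.filter_subset _ _),
        Nat.cast_sub (Finset.card_filter_le _ _)]
      simp [Finset.card_univ]
    have hqc : ((Finset.univ.filter (fun y => A w y)).card : ℝ) = q w * Fintype.card Y := by
      rw [hq]; field_simp
    have habs : |t| ≤ 1 := abs_le.2 ⟨by linarith, ht1⟩
    have hm := mgf_bound (hq0 w) (hq1 w) habs
    have hexpand : ((Finset.univ.filter (fun y => A w y)).card : ℝ) * Real.exp (t * (1 - q w))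
        + ((Finset.univ.filter (fun y => ¬ A w y)).card : ℝ) * Real.exp (t * (0 - q w))
        = (Fintype.card Y) * (Real.exp (-(t * q w)) * (1 + q w * (Real.exp t - 1))) := by
      rw [hcompl, hqc]
      have e1 : Real.exp (t * (1 - q w)) = Real.exp t * Real.exp (-(t * q w)) := by
        rw [← Real.exp_add]; ring_nf
      have e2 : Real.exp (t * (0 - q w)) = Real.exp (-(t * q w)) := by ring_nf
      rw [e1, e2]
      ring
    rw [hexpand]
    exact mul_le_mul_of_nonneg_left hm hY.le
  -- combine
  have hprod : ∏ w : W, ∑ y : Y, Real.exp (t * ((if A w y then (1:ℝ) else 0) - q w)) ≤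
      ∏ w : W, ((Fintype.card Y : ℝ) * Real.exp (t^2)) := by
    apply Finset.prod_le_prod
    · intro w _; exact Finset.sum_nonneg fun _ _ => (Real.exp_pos _).le
    · intro w _; exact step3 w
  rw [Finset.prod_const, Finset.card_univ] at hprod
  calc ((Finset.univ.filter (fun f : W → Y => a ≤ Dev A f)).card : ℝ)
      ≤ ∑ f : W → Y, Real.exp (t * (Dev A f - a)) := step1
    _ = Real.exp (-(t*a)) * ∏ w : W, ∑ y : Y, Real.exp (t * ((if A w y then (1:ℝ) else 0) - q w)) := step2
    _ ≤ Real.exp (-(t*a)) * (((Fintype.card Y : ℝ) * Real.exp (t^2)) ^ (Fintype.card W)) :=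
        mul_le_mul_of_nonneg_left hprod (Real.exp_pos _).le
    _ = Real.exp ((Fintype.card W) * t^2 - t * a) * Fintype.card (W → Y) := by
        rw [mul_pow, ← Real.exp_nat_mul, Fintype.card_fun,
          show ((Fintype.card W):ℝ)*t^2 - t*a = -(t*a) + (Fintype.card W)*t^2 by ring,
          Real.exp_add]
        push_cast
        ring
end chernoff

section chernoff2
variable {W Y : Type} [Fintype W] [Fintype Y] [DecidableEq W] [DecidableEq Y] [Nonempty Y]
variable (A : W → Y → Prop) [∀ w y, Decidable (A w y)]

lemma Dev_neg (f : W → Y) : Dev (fun w y => ¬ A w y) f = - Dev A f := by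
  rw [Dev, Dev, ← Finset.sum_neg_distrib]
  apply Finset.sum_congr rfl
  intro w _
  have hcompl : ((Finset.univ.filter (fun y => ¬ A w y)).card : ℝ) =
      Fintype.card Y - (Finset.univ.filter (fun y => A w y)).card := by
    rw [Finset.filter_not, Finset.card_sdiff_of_subset (Finset.filter_subset _ _),
      Nat.cast_sub (Finset.card_filter_le _ _)]
    simp [Finset.card_univ]
  rw [hcompl]
  have hY : (0:ℝ) < Fintype.card Y := by positivity
  by_cases h : A w (f w) <;> simp [h] <;> field_simp <;> ring

lemma chernoff_two_sided (t a : ℝ) (ht0 : 0 ≤ t) (ht1 : t ≤ 1) :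
    ((Finset.univ.filter (fun f : W → Y => ¬ |Dev A f| ≤ a)).card : ℝ) ≤
      2 * Real.exp ((Fintype.card W) * t^2 - t * a) * Fintype.card (W → Y) := by
  classical
  have hsub : Finset.univ.filter (fun f : W → Y => ¬ |Dev A f| ≤ a) ⊆
      (Finset.univ.filter (fun f : W → Y => a ≤ Dev A f)) ∪
      (Finset.univ.filter (fun f : W → Y => a ≤ Dev (fun w y => ¬ A w y) f)) := by
    intro f hf
    simp only [Finset.mem_filter, Finset.mem_union, Finset.mem_univ, true_and] at hf ⊢
    rw [Dev_neg]
    rcases abs_cases (Dev A f) with ⟨he, _⟩ | ⟨he, _⟩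
    · left; rw [← he]; linarith
    · right; push_neg at hf; rw [he] at hf; linarith
  have h1 := chernoff_one_sided A t a ht0 ht1
  have h2 := chernoff_one_sided (fun w y => ¬ A w y) t a ht0 ht1
  have hu := Finset.card_le_card hsub
  have hcu := Finset.card_union_le (Finset.univ.filter (fun f : W → Y => a ≤ Dev A f))
      (Finset.univ.filter (fun f : W → Y => a ≤ Dev (fun w y => ¬ A w y) f))
  have : ((Finset.univ.filter (fun f : W → Y => ¬ |Dev A f| ≤ a)).card : ℝ) ≤
      ((Finset.univ.filter (fun f : W → Y => a ≤ Dev A f)).card : ℝ) +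
      ((Finset.univ.filter (fun f : W → Y => a ≤ Dev (fun w y => ¬ A w y) f)).card : ℝ) := by
    exact_mod_cast le_trans hu hcu
  linarith
end chernoff2
variable {W Y : Type} [Fintype W] [Fintype Y]

lemma card_filter_prod (P : W → Y → Prop) [∀ w y, Decidable (P w y)] :
    (Finset.univ.filter fun wu : W × Y => P wu.1 wu.2).card
      = ∑ w : W, (Finset.univ.filter (fun y => P w y)).card := by
  rw [Finset.card_filter, Fintype.sum_prod_type]
  exact Finset.sum_congr rfl fun w _ => (Finset.card_filter _ _).symm

lemma card_filter_fst (p : W → Prop) [DecidablePred p] :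
    (Finset.univ.filter fun wu : W × Y => p wu.1).card
      = (Finset.univ.filter p).card * Fintype.card Y := by
  rw [card_filter_prod (fun w _ => p w), Finset.card_filter, Finset.sum_mul]
  apply Finset.sum_congr rfl
  intro w _
  by_cases h : p w <;> simp [h, Finset.card_univ]

open Classical Real in
lemma good_to_filter {n m : ℕ} (ε : ℝ) (hε : 0 < ε) (d : ℕ)
    (f : (Fin n → Bool) → (Fin m → Bool))
    (hf : ∀ s ∈ shapes n d,
      ∀ S ∈ ((listsLe d) ×ˢ (Finset.univ : Finset (Fin m → Bool))).powerset,
        |Dev (fun w y => (s.pathfn w, y) ∈ S) f| ≤ ε * 2 ^ n)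
    (T : DTree n (List Bool)) (hT : T.depth ≤ d) :
    (⨆ T' : Set (List Bool × (Fin m → Bool)),
        |((Finset.univ.filter fun wu : (Fin n → Bool) × (Fin m → Bool) =>
              (T.eval wu.1, f wu.1) ∈ T').card : ℝ) / 2 ^ (n + m)
          - ((Finset.univ.filter fun wu : (Fin n → Bool) × (Fin m → Bool) =>
              (T.eval wu.1, wu.2) ∈ T').card : ℝ) / 2 ^ (n + m)|) ≤ ε := by
  classical
  apply Real.iSup_le _ hε.le
  intro T'
  obtain ⟨r, hr⟩ := T.eval_eq_of_pathfn
  set s := T.strip with hsdef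
  have hs : s ∈ shapes n d := mem_shapes (by rw [T.depth_strip]; exact hT)
  set S : Finset (List Bool × (Fin m → Bool)) :=
    ((listsLe d) ×ˢ (Finset.univ : Finset (Fin m → Bool))).filter
      (fun py => (r py.1, py.2) ∈ T') with hSdef
  have hSmem : S ∈ ((listsLe d) ×ˢ (Finset.univ : Finset (Fin m → Bool))).powerset :=
    Finset.mem_powerset.2 (Finset.filter_subset _ _)
  have hkey : ∀ w y, ((T.eval w, y) ∈ T') ↔ (s.pathfn w, y) ∈ S := by
    intro w y
    simp only [hSdef, Finset.mem_filter, Finset.mem_product, Finset.mem_univ, and_true]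
    rw [T.pathfn_strip]
    constructor
    · intro h
      exact ⟨mem_listsLe (le_trans (T.length_pathfn w) hT), by rw [← hr]; exact h⟩
    · rintro ⟨-, h⟩
      rw [hr]; exact h
  have hcY : (Fintype.card (Fin m → Bool)) = 2 ^ m := by
    rw [Fintype.card_fun]; simp
  -- first count
  have hC1 : (Finset.univ.filter fun wu : (Fin n → Bool) × (Fin m → Bool) =>
        (T.eval wu.1, f wu.1) ∈ T').card
      = (Finset.univ.filter fun w => (s.pathfn w, f w) ∈ S).card * 2 ^ m := by
    rw [Finset.filter_congr (fun wu _ => by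
      rw [show ((T.eval wu.1, f wu.1) ∈ T') ↔ (s.pathfn wu.1, f wu.1) ∈ S from hkey _ _])]
    rw [card_filter_fst (fun w => (s.pathfn w, f w) ∈ S), hcY]
  -- second count
  have hC2 : (Finset.univ.filter fun wu : (Fin n → Bool) × (Fin m → Bool) =>
        (T.eval wu.1, wu.2) ∈ T').card
      = ∑ w : Fin n → Bool, (Finset.univ.filter fun y => (s.pathfn w, y) ∈ S).card := by
    rw [Finset.filter_congr (fun wu _ => by
      rw [show ((T.eval wu.1, wu.2) ∈ T') ↔ (s.pathfn wu.1, wu.2) ∈ S from hkey _ _])]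
    exact card_filter_prod (fun w y => (s.pathfn w, y) ∈ S)
  have hDev : Dev (fun w y => (s.pathfn w, y) ∈ S) f
      = ((Finset.univ.filter fun w => (s.pathfn w, f w) ∈ S).card : ℝ)
        - (∑ w : Fin n → Bool,
            ((Finset.univ.filter fun y => (s.pathfn w, y) ∈ S).card : ℝ)) / 2 ^ m := by
    rw [Dev, Finset.sum_sub_distrib, Finset.sum_boole, ← Finset.sum_div, hcY]
    push_cast
    ring
  have h2n : (0:ℝ) < 2 ^ n := by positivity
  have h2m : (0:ℝ) < 2 ^ m := by positivity
  have heq : ((Finset.univ.filter fun wu : (Fin n → Bool) × (Fin m → Bool) =>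
          (T.eval wu.1, f wu.1) ∈ T').card : ℝ) / 2 ^ (n + m)
        - ((Finset.univ.filter fun wu : (Fin n → Bool) × (Fin m → Bool) =>
          (T.eval wu.1, wu.2) ∈ T').card : ℝ) / 2 ^ (n + m)
      = Dev (fun w y => (s.pathfn w, y) ∈ S) f / 2 ^ n := by
    rw [hC1, hC2, hDev, pow_add]
    push_cast
    field_simp
  rw [heq, abs_div, abs_of_pos h2n, div_le_iff₀ h2n]
  exact hf s hs S hSmem

lemma numeric_final (n k m : ℕ) (ε : ℝ) (hk1 : 1 ≤ k) (hkn : k ≤ n) (hε : 0 < ε) (hε1 : ε < 1)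
    (hm : (m:ℝ) ≤ (k:ℝ) - 2 * Real.logb 2 (1/ε) - 40)
    (hk : Real.logb 2 (Real.logb 2 (n:ℝ)) + 2 * Real.logb 2 (1/ε) + 40 ≤ (k:ℝ)) :
    ((shapes n (n-k)).card : ℝ) *
      (((listsLe (n-k) ×ˢ (Finset.univ : Finset (Fin m → Bool))).powerset).card : ℝ)
      * (2 * Real.exp (-((2^n * ε^2)/4))) ≤ (2:ℝ) ^ (-((2^n * ε^2)/16)) := by
  have hn1 : 1 ≤ n := le_trans hk1 hkn
  set E : ℝ := 2^n * ε^2 with hE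
  have hEpos : 0 < E := by positivity
  set L : ℝ := Real.logb 2 ε with hLdef
  have h2L : (2:ℝ) ^ L = ε := Real.rpow_logb two_pos (by norm_num) hε
  have hLinv : Real.logb 2 (1/ε) = -L := by rw [one_div, Real.logb_inv]
  rw [hLinv] at hm hk
  have hLneg : L < 0 := Real.logb_neg one_lt_two hε hε1
  have hn2 : 2 ≤ n := by
    by_contra hcon
    push_neg at hcon
    have hn1' : n = 1 := by omega
    have hk' : k = 1 := by omega
    rw [hn1', hk'] at hk
    norm_num [Real.logb_one, Real.logb_zero] at hk
    linarith
  have hXpos : (0:ℝ) < (n:ℝ) := by positivity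
  set ln : ℝ := Real.logb 2 (n:ℝ) with hlndef
  have hln1 : 1 ≤ ln := by
    rw [hlndef]
    rw [Real.le_logb_iff_rpow_le one_lt_two hXpos, Real.rpow_one]
    exact_mod_cast hn2
  have h2ln : (2:ℝ) ^ ln = (n:ℝ) := Real.rpow_logb two_pos (by norm_num) hXpos
  have h2lln : (2:ℝ) ^ (Real.logb 2 ln) = ln :=
    Real.rpow_logb two_pos (by norm_num) (by linarith)
  have hDeq : ((n - k : ℕ):ℝ) = (n:ℝ) - (k:ℝ) := by
    rw [Nat.cast_sub hkn]
  set D : ℝ := (n:ℝ) - (k:ℝ) with hDdef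
  have hE2 : E = (2:ℝ) ^ ((n:ℝ) + 2*L) := by
    rw [Real.rpow_add two_pos, Real.rpow_natCast]
    rw [hE]
    congr 1
    rw [two_mul, Real.rpow_add two_pos, h2L]
    ring
  have hlln0 : 0 ≤ Real.logb 2 ln := Real.logb_nonneg one_lt_two hln1
  have hknR : (k:ℝ) ≤ (n:ℝ) := by exact_mod_cast hkn
  have hE40 : (2:ℝ) ^ (40:ℝ) ≤ E := by
    rw [hE2]
    apply Real.rpow_le_rpow_of_exponent_le one_le_two
    linarith
  have hXL40 : E * (2:ℝ)^(-(40:ℝ)) = (2:ℝ) ^ ((n:ℝ) + 2*L - 40) := by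
    rw [hE2, ← Real.rpow_add two_pos]
    ring_nf
  have key1 : (2:ℝ) ^ D * ln ≤ E * (2:ℝ)^(-(40:ℝ)) := by
    have h1 : (2:ℝ)^D * ln = 2 ^ (D + Real.logb 2 ln) := by
      rw [Real.rpow_add two_pos, h2lln]
    rw [h1, hXL40]
    apply Real.rpow_le_rpow_of_exponent_le one_le_two
    rw [hDdef]
    linarith
  have key2 : (2:ℝ) ^ (D + (m:ℝ)) ≤ E * (2:ℝ)^(-(40:ℝ)) := by
    rw [hXL40]
    apply Real.rpow_le_rpow_of_exponent_le one_le_two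
    rw [hDdef]
    linarith
  -- bound on the number of shapes
  have h2D : ((2^(n-k) : ℕ) : ℝ) = (2:ℝ) ^ D := by
    push_cast
    rw [← Real.rpow_natCast 2 (n-k), hDeq]
  have hcS : ((shapes n (n-k)).card : ℝ) ≤ (2:ℝ) ^ (3 * ((2:ℝ)^D * ln)) := by
    have h1 : ((shapes n (n-k)).card : ℝ) ≤ (((2*n+2) ^ (2^(n-k) - 1) : ℕ) : ℝ) := by
      exact_mod_cast card_shapes n (n-k)
    have hbase : ((2*n+2 : ℕ) : ℝ) ≤ (2:ℝ) ^ ((2:ℝ) + ln) := by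
      rw [Real.rpow_add two_pos, h2ln]
      have h4 : (2:ℝ) ^ (2:ℝ) = 4 := by
        rw [show (2:ℝ) = ((2:ℕ):ℝ) from by norm_num, Real.rpow_natCast]
        norm_num
      rw [h4]
      push_cast
      have : (1:ℝ) ≤ (n:ℝ) := by exact_mod_cast hn1
      linarith
    have h2 : (((2*n+2) ^ (2^(n-k) - 1) : ℕ) : ℝ)
        ≤ ((2:ℝ) ^ ((2:ℝ) + ln)) ^ (2^(n-k) - 1 : ℕ) := by
      push_cast
      exact pow_le_pow_left₀ (by positivity) (by exact_mod_cast hbase) _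
    have h3 : ((2:ℝ) ^ ((2:ℝ) + ln)) ^ (2^(n-k) - 1 : ℕ)
        = (2:ℝ) ^ (((2:ℝ) + ln) * ((2^(n-k) - 1 : ℕ) : ℝ)) := by
      rw [Real.rpow_mul (by norm_num : (0:ℝ) ≤ 2), Real.rpow_natCast]
    have h4 : ((2:ℝ) + ln) * ((2^(n-k) - 1 : ℕ) : ℝ) ≤ 3 * ((2:ℝ)^D * ln) := by
      have hc1 : ((2^(n-k) - 1 : ℕ) : ℝ) ≤ (2:ℝ) ^ D := by
        rw [← h2D]
        exact_mod_cast Nat.sub_le _ _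
      have hc0 : (0:ℝ) ≤ ((2^(n-k) - 1 : ℕ) : ℝ) := by positivity
      calc ((2:ℝ) + ln) * ((2^(n-k) - 1 : ℕ) : ℝ)
          ≤ (3 * ln) * ((2:ℝ) ^ D) := by
            apply mul_le_mul (by linarith) hc1 hc0 (by positivity)
        _ = 3 * ((2:ℝ)^D * ln) := by ring
    calc ((shapes n (n-k)).card : ℝ) ≤ _ := h1
      _ ≤ _ := h2
      _ = _ := h3
      _ ≤ (2:ℝ) ^ (3 * ((2:ℝ)^D * ln)) := Real.rpow_le_rpow_of_exponent_le one_le_two h4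
  -- bound on the number of subsets
  have hcP : (((listsLe (n-k) ×ˢ (Finset.univ : Finset (Fin m → Bool))).powerset).card : ℝ)
      ≤ (2:ℝ) ^ (2 * (2:ℝ) ^ (D + (m:ℝ))) := by
    have hY : (Finset.univ : Finset (Fin m → Bool)).card = 2 ^ m := by
      rw [Finset.card_univ, Fintype.card_fun]
      simp
    have hnat : ((listsLe (n-k) ×ˢ (Finset.univ : Finset (Fin m → Bool))).powerset).card
        ≤ 2 ^ (2 ^ ((n-k) + 1 + m)) := by
      rw [Finset.card_powerset, Finset.card_product, hY]
      apply Nat.pow_le_pow_right (by norm_num)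
      calc (listsLe (n-k)).card * 2 ^ m ≤ 2 ^ ((n-k)+1) * 2 ^ m := by
            exact Nat.mul_le_mul_right _ (le_of_lt (card_listsLe (n-k)))
        _ = 2 ^ ((n-k) + 1 + m) := by rw [← pow_add]
    have hcast : ((2 ^ (2 ^ ((n-k) + 1 + m)) : ℕ) : ℝ)
        = (2:ℝ) ^ (((2 ^ ((n-k) + 1 + m) : ℕ)) : ℝ) := by
      push_cast
      rw [← Real.rpow_natCast 2 (2 ^ ((n-k) + 1 + m))]
      push_cast
      ring_nf
    have hexpeq : (((2 ^ ((n-k) + 1 + m) : ℕ)) : ℝ) = 2 * (2:ℝ) ^ (D + (m:ℝ)) := by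
      push_cast
      rw [← Real.rpow_natCast 2 ((n-k) + 1 + m)]
      push_cast [hDeq]
      rw [show ((n:ℝ) - (k:ℝ)) + 1 + (m:ℝ) = (D + (m:ℝ)) + 1 from by rw [hDdef]; ring]
      rw [Real.rpow_add two_pos, Real.rpow_one]
      ring
    calc (((listsLe (n-k) ×ˢ (Finset.univ : Finset (Fin m → Bool))).powerset).card : ℝ)
        ≤ ((2 ^ (2 ^ ((n-k) + 1 + m)) : ℕ) : ℝ) := by exact_mod_cast hnat
      _ = (2:ℝ) ^ (2 * (2:ℝ) ^ (D + (m:ℝ))) := by rw [hcast, hexpeq]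
  -- the exponential factor
  have hexp2 : 2 * Real.exp (-(E/4)) ≤ (2:ℝ) ^ ((1:ℝ) - E/4) := by
    have h1 : (2:ℝ) ^ ((1:ℝ) - E/4) = 2 * (2:ℝ) ^ (-(E/4)) := by
      rw [show (1:ℝ) - E/4 = 1 + (-(E/4)) from by ring, Real.rpow_add two_pos, Real.rpow_one]
    rw [h1]
    have h2 : Real.exp (-(E/4)) ≤ (2:ℝ) ^ (-(E/4)) := by
      rw [Real.rpow_def_of_pos two_pos]
      apply Real.exp_le_exp.2
      have hlog2 : Real.log 2 ≤ 1 := by linarith [Real.log_le_sub_one_of_pos (by norm_num : (0:ℝ) < 2)]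
      nlinarith [hEpos]
    linarith
  -- combine
  have hprod : ((shapes n (n-k)).card : ℝ) *
      (((listsLe (n-k) ×ˢ (Finset.univ : Finset (Fin m → Bool))).powerset).card : ℝ)
      * (2 * Real.exp (-(E/4)))
      ≤ (2:ℝ) ^ (3 * ((2:ℝ)^D * ln) + 2 * (2:ℝ) ^ (D + (m:ℝ)) + ((1:ℝ) - E/4)) := by
    rw [Real.rpow_add two_pos, Real.rpow_add two_pos]
    apply mul_le_mul
    · apply mul_le_mul hcS hcP (by positivity) (by positivity)
    · exact hexp2
    · positivity
    · positivity
  refine le_trans hprod ?_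
  apply Real.rpow_le_rpow_of_exponent_le one_le_two
  -- final linear arithmetic
  have hsmall : (2:ℝ)^(-(40:ℝ)) ≤ 1/1024 := by
    have h10 : (2:ℝ)^(-(10:ℝ)) = 1/1024 := by
      rw [Real.rpow_neg (by norm_num : (0:ℝ) ≤ 2)]
      rw [show (10:ℝ) = ((10:ℕ):ℝ) from by norm_num, Real.rpow_natCast]
      norm_num
    rw [← h10]
    exact Real.rpow_le_rpow_of_exponent_le one_le_two (by norm_num)
  have hu1 : 1 ≤ E * (2:ℝ)^(-(40:ℝ)) := by
    have : (2:ℝ)^(40:ℝ) * (2:ℝ)^(-(40:ℝ)) = 1 := by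
      rw [← Real.rpow_add two_pos]; norm_num
    have hp : (0:ℝ) < (2:ℝ)^(-(40:ℝ)) := Real.rpow_pos_of_pos two_pos _
    calc (1:ℝ) = (2:ℝ)^(40:ℝ) * (2:ℝ)^(-(40:ℝ)) := this.symm
      _ ≤ E * (2:ℝ)^(-(40:ℝ)) := mul_le_mul_of_nonneg_right hE40 hp.le
  have hupos : (0:ℝ) < (2:ℝ)^(-(40:ℝ)) := Real.rpow_pos_of_pos two_pos _
  have huE : E * (2:ℝ)^(-(40:ℝ)) ≤ E / 1024 := by
    calc E * (2:ℝ)^(-(40:ℝ)) ≤ E * (1/1024) := by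
          exact mul_le_mul_of_nonneg_left hsmall hEpos.le
      _ = E / 1024 := by ring
  have hln_bound : (2:ℝ)^D * ln ≤ E / 1024 := le_trans key1 huE
  have hm_bound : (2:ℝ)^(D + (m:ℝ)) ≤ E / 1024 := le_trans key2 huE
  have h1E : (1:ℝ) ≤ E / 1024 := le_trans hu1 huE
  linarith


open Classical in
/-- There are constants `c₁, c₂ > 0` such that for `m ≤ k - 2log₂(1/ε) - c₁` and
`k ≥ log₂log₂ n + 2log₂(1/ε) + c₁`, a uniformly random `f : {0,1}ⁿ → {0,1}^m` is an
adaptive `(k,ε)`-ERF with probability at least `1 - 2^{-c₂·2ⁿ·ε²}`: for every adaptive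
adversary `A` (a decision tree reading at most `n-k` bits),
`Δ((A(U_n), f(U_n)), (A(U_n), U_m)) ≤ ε`, where the distance is the supremum over
events and probabilities are over uniform `(w, u)`. -/
theorem random_function_is_adaptiveERF :
    ∃ c1 : ℝ, 0 < c1 ∧ ∃ c2 : ℝ, 0 < c2 ∧
      ∀ (n k m : ℕ) (ε : ℝ), 1 ≤ k → k ≤ n → 0 < ε →
        (m : ℝ) ≤ k - 2 * Real.logb 2 (1 / ε) - c1 →
        Real.logb 2 (Real.logb 2 n) + 2 * Real.logb 2 (1 / ε) + c1 ≤ k →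
        1 - (2 : ℝ) ^ (-(c2 * 2 ^ n * ε ^ 2)) ≤
          ((Finset.univ.filter fun f : (Fin n → Bool) → (Fin m → Bool) =>
              ∀ T : DTree n (List Bool), T.depth ≤ n - k →
                (⨆ T' : Set (List Bool × (Fin m → Bool)),
                    |((Finset.univ.filter fun wu : (Fin n → Bool) × (Fin m → Bool) =>
                          (T.eval wu.1, f wu.1) ∈ T').card : ℝ) / 2 ^ (n + m)
                      - ((Finset.univ.filter fun wu : (Fin n → Bool) × (Fin m → Bool) =>
                          (T.eval wu.1, wu.2) ∈ T').card : ℝ) / 2 ^ (n + m)|) ≤ ε).card : ℝ)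
            / Fintype.card ((Fin n → Bool) → (Fin m → Bool)) := by
  refine ⟨40, by norm_num, 1/16, by norm_num, ?_⟩
  intro n k m ε hk1 hkn hε hm hk
  classical
  have hFpos : (0:ℝ) < (Fintype.card ((Fin n → Bool) → (Fin m → Bool)) : ℝ) :=
    Nat.cast_pos.2 Fintype.card_pos
  have hrppos : (0:ℝ) < (2 : ℝ) ^ (-(1/16 * 2 ^ n * ε ^ 2)) := Real.rpow_pos_of_pos two_pos _
  have hcardWY : (Fintype.card ((Fin n → Bool) × (Fin m → Bool))) = 2 ^ (n + m) := by
    simp [Fintype.card_fun, pow_add]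
  by_cases hε1 : 1 ≤ ε
  · -- trivial case : every f is good
    have hall : (Finset.univ.filter fun f : (Fin n → Bool) → (Fin m → Bool) =>
        ∀ T : DTree n (List Bool), T.depth ≤ n - k →
          (⨆ T' : Set (List Bool × (Fin m → Bool)),
              |((Finset.univ.filter fun wu : (Fin n → Bool) × (Fin m → Bool) =>
                    (T.eval wu.1, f wu.1) ∈ T').card : ℝ) / 2 ^ (n + m)
                - ((Finset.univ.filter fun wu : (Fin n → Bool) × (Fin m → Bool) =>
                    (T.eval wu.1, wu.2) ∈ T').card : ℝ) / 2 ^ (n + m)|) ≤ ε)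
        = Finset.univ := by
      apply Finset.filter_true_of_mem
      intro f _
      intro T _
      apply Real.iSup_le _ hε.le
      intro T'
      have h2nm : (0:ℝ) < 2 ^ (n + m) := by positivity
      have hb1 : ((Finset.univ.filter fun wu : (Fin n → Bool) × (Fin m → Bool) =>
          (T.eval wu.1, f wu.1) ∈ T').card : ℝ) / 2 ^ (n + m) ∈ Set.Icc (0:ℝ) 1 := by
        constructor
        · positivity
        · rw [div_le_one h2nm]
          calc ((Finset.univ.filter fun wu : (Fin n → Bool) × (Fin m → Bool) =>
                (T.eval wu.1, f wu.1) ∈ T').card : ℝ)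
              ≤ (Finset.univ.card : ℝ) := by exact_mod_cast Finset.card_filter_le _ _
            _ = 2 ^ (n + m) := by rw [Finset.card_univ, hcardWY]; push_cast; ring
      have hb2 : ((Finset.univ.filter fun wu : (Fin n → Bool) × (Fin m → Bool) =>
          (T.eval wu.1, wu.2) ∈ T').card : ℝ) / 2 ^ (n + m) ∈ Set.Icc (0:ℝ) 1 := by
        constructor
        · positivity
        · rw [div_le_one h2nm]
          calc ((Finset.univ.filter fun wu : (Fin n → Bool) × (Fin m → Bool) =>
                (T.eval wu.1, wu.2) ∈ T').card : ℝ)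
              ≤ (Finset.univ.card : ℝ) := by exact_mod_cast Finset.card_filter_le _ _
            _ = 2 ^ (n + m) := by rw [Finset.card_univ, hcardWY]; push_cast; ring
      obtain ⟨ha0, ha1⟩ := hb1
      obtain ⟨hb0, hb1'⟩ := hb2
      rw [abs_sub_le_iff]
      constructor <;> linarith
    rw [hall, Finset.card_univ, div_self (ne_of_gt hFpos)]
    linarith
  · push_neg at hε1
    obtain ⟨d, hd⟩ : ∃ d, d = n - k := ⟨n - k, rfl⟩
    set E : ℝ := 2 ^ n * ε ^ 2 with hE
    have hEpos : 0 < E := by positivity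
    -- the good set
    set Good : Finset ((Fin n → Bool) → (Fin m → Bool)) :=
      Finset.univ.filter (fun f => ∀ s ∈ shapes n d,
        ∀ S ∈ ((listsLe d) ×ˢ (Finset.univ : Finset (Fin m → Bool))).powerset,
          |Dev (fun w y => (s.pathfn w, y) ∈ S) f| ≤ ε * 2 ^ n) with hGood
    set Bad : Finset ((Fin n → Bool) → (Fin m → Bool)) :=
      Finset.univ.filter (fun f => ¬ (∀ s ∈ shapes n d,
        ∀ S ∈ ((listsLe d) ×ˢ (Finset.univ : Finset (Fin m → Bool))).powerset,
          |Dev (fun w y => (s.pathfn w, y) ∈ S) f| ≤ ε * 2 ^ n)) with hBadDef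
    have hsplit : Good.card + Bad.card
        = Fintype.card ((Fin n → Bool) → (Fin m → Bool)) := by
      rw [hGood, hBadDef, Finset.card_filter_add_card_filter_not, Finset.card_univ]
    have hGle : Good ⊆ (Finset.univ.filter fun f : (Fin n → Bool) → (Fin m → Bool) =>
        ∀ T : DTree n (List Bool), T.depth ≤ n - k →
          (⨆ T' : Set (List Bool × (Fin m → Bool)),
              |((Finset.univ.filter fun wu : (Fin n → Bool) × (Fin m → Bool) =>
                    (T.eval wu.1, f wu.1) ∈ T').card : ℝ) / 2 ^ (n + m)
                - ((Finset.univ.filter fun wu : (Fin n → Bool) × (Fin m → Bool) =>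
                    (T.eval wu.1, wu.2) ∈ T').card : ℝ) / 2 ^ (n + m)|) ≤ ε) := by
      intro f hf
      rw [hGood, Finset.mem_filter] at hf
      rw [Finset.mem_filter]
      exact ⟨Finset.mem_univ f, fun T hT => good_to_filter ε hε d f hf.2 T (by rw [hd]; exact hT)⟩
    -- union bound
    have hBadsub : Bad ⊆ (shapes n d).biUnion (fun s =>
        (((listsLe d) ×ˢ (Finset.univ : Finset (Fin m → Bool))).powerset).biUnion (fun S =>
          Finset.univ.filter (fun f => ¬ |Dev (fun w y => (s.pathfn w, y) ∈ S) f| ≤ ε * 2 ^ n))) := by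
      intro f hf
      rw [hBadDef, Finset.mem_filter] at hf
      push_neg at hf
      obtain ⟨s, hs, S, hS, hbad⟩ := hf.2
      rw [Finset.mem_biUnion]
      exact ⟨s, hs, Finset.mem_biUnion.2 ⟨S, hS, Finset.mem_filter.2
        ⟨Finset.mem_univ f, not_le.2 hbad⟩⟩⟩
    have hcW : (Fintype.card (Fin n → Bool)) = 2 ^ n := by simp [Fintype.card_fun]
    -- per-pair Chernoff bound
    have hpair : ∀ (s : DTree n Unit) (S : Finset (List Bool × (Fin m → Bool))), ((Finset.univ.filter
        (fun f : (Fin n → Bool) → (Fin m → Bool) =>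
          ¬ |Dev (fun w y => (s.pathfn w, y) ∈ S) f| ≤ ε * 2 ^ n)).card : ℝ) ≤
        2 * Real.exp (-(E/4)) * (Fintype.card ((Fin n → Bool) → (Fin m → Bool)) : ℝ) := by
      intro s S
      have hch := chernoff_two_sided (fun w y => (s.pathfn w, y) ∈ S) (ε/2) (ε * 2 ^ n)
        (by linarith) (by linarith)
      rw [hcW] at hch
      have hexp : ((2 ^ n : ℕ) : ℝ) * (ε/2)^2 - (ε/2) * (ε * 2 ^ n) = -(E/4) := by
        rw [hE]; push_cast; ring
      rw [hexp] at hch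
      exact hch
    -- total bad bound (nat then real)
    have hBadNat : Bad.card ≤ ∑ s ∈ shapes n d,
        ∑ S ∈ ((listsLe d) ×ˢ (Finset.univ : Finset (Fin m → Bool))).powerset,
          (Finset.univ.filter (fun f : (Fin n → Bool) → (Fin m → Bool) =>
            ¬ |Dev (fun w y => (s.pathfn w, y) ∈ S) f| ≤ ε * 2 ^ n)).card := by
      refine le_trans (Finset.card_le_card hBadsub) ?_
      refine le_trans (Finset.card_biUnion_le) ?_
      exact Finset.sum_le_sum fun s _ => Finset.card_biUnion_le
    have hBadR : (Bad.card : ℝ) ≤ ((shapes n d).card : ℝ) *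
        ((((listsLe d) ×ˢ (Finset.univ : Finset (Fin m → Bool))).powerset).card : ℝ) *
        (2 * Real.exp (-(E/4))) * (Fintype.card ((Fin n → Bool) → (Fin m → Bool)) : ℝ) := by
      calc (Bad.card : ℝ) ≤ ∑ s ∈ shapes n d,
          ∑ S ∈ ((listsLe d) ×ˢ (Finset.univ : Finset (Fin m → Bool))).powerset,
            ((Finset.univ.filter (fun f : (Fin n → Bool) → (Fin m → Bool) =>
              ¬ |Dev (fun w y => (s.pathfn w, y) ∈ S) f| ≤ ε * 2 ^ n)).card : ℝ) := by
            exact_mod_cast hBadNat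
        _ ≤ ∑ _s ∈ shapes n d,
            ∑ _S ∈ ((listsLe d) ×ˢ (Finset.univ : Finset (Fin m → Bool))).powerset,
              (2 * Real.exp (-(E/4)) *
                (Fintype.card ((Fin n → Bool) → (Fin m → Bool)) : ℝ)) := by
            refine Finset.sum_le_sum fun s _ => Finset.sum_le_sum fun S _ => hpair s S
        _ = ((shapes n d).card : ℝ) *
            ((((listsLe d) ×ˢ (Finset.univ : Finset (Fin m → Bool))).powerset).card : ℝ) *
            (2 * Real.exp (-(E/4))) * (Fintype.card ((Fin n → Bool) → (Fin m → Bool)) : ℝ) := by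
            rw [Finset.sum_const, Finset.sum_const, nsmul_eq_mul, nsmul_eq_mul]
            ring
    have hfinal : ((shapes n d).card : ℝ) *
        ((((listsLe d) ×ˢ (Finset.univ : Finset (Fin m → Bool))).powerset).card : ℝ) *
        (2 * Real.exp (-(E/4))) ≤ (2:ℝ) ^ (-(E/16)) := by
      rw [hd, hE]
      exact numeric_final n k m ε hk1 hkn hε hε1 hm hk
    -- conclude
    have hBadFin : (Bad.card : ℝ) ≤ (2:ℝ) ^ (-(E/16)) *
        (Fintype.card ((Fin n → Bool) → (Fin m → Bool)) : ℝ) := by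
      refine le_trans hBadR ?_
      exact mul_le_mul_of_nonneg_right hfinal hFpos.le
    have hGoodBig := Finset.card_le_card hGle
    have hgoal : (1 : ℝ) - (2:ℝ) ^ (-(1/16 * 2 ^ n * ε ^ 2)) ≤
        ((Finset.univ.filter fun f : (Fin n → Bool) → (Fin m → Bool) =>
            ∀ T : DTree n (List Bool), T.depth ≤ n - k →
              (⨆ T' : Set (List Bool × (Fin m → Bool)),
                  |((Finset.univ.filter fun wu : (Fin n → Bool) × (Fin m → Bool) =>
                        (T.eval wu.1, f wu.1) ∈ T').card : ℝ) / 2 ^ (n + m)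
                    - ((Finset.univ.filter fun wu : (Fin n → Bool) × (Fin m → Bool) =>
                        (T.eval wu.1, wu.2) ∈ T').card : ℝ) / 2 ^ (n + m)|) ≤ ε).card : ℝ)
          / Fintype.card ((Fin n → Bool) → (Fin m → Bool)) := by
      rw [le_div_iff₀ hFpos]
      have hEeq : -(1/16 * 2 ^ n * ε ^ 2) = -(E/16) := by rw [hE]; ring
      rw [hEeq]
      have hGR : (Good.card : ℝ) ≤
          ((Finset.univ.filter fun f : (Fin n → Bool) → (Fin m → Bool) =>
            ∀ T : DTree n (List Bool), T.depth ≤ n - k →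
              (⨆ T' : Set (List Bool × (Fin m → Bool)),
                  |((Finset.univ.filter fun wu : (Fin n → Bool) × (Fin m → Bool) =>
                        (T.eval wu.1, f wu.1) ∈ T').card : ℝ) / 2 ^ (n + m)
                    - ((Finset.univ.filter fun wu : (Fin n → Bool) × (Fin m → Bool) =>
                        (T.eval wu.1, wu.2) ∈ T').card : ℝ) / 2 ^ (n + m)|) ≤ ε).card : ℝ) := by
        exact_mod_cast hGoodBig
      have hsplitR : (Good.card : ℝ) + (Bad.card : ℝ)
          = (Fintype.card ((Fin n → Bool) → (Fin m → Bool)) : ℝ) := by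
        exact_mod_cast hsplit
      nlinarith [hBadFin, hGR, hsplitR]
    exact hgoal
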